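/- The family B_c of sets U_α(α₁,…,α_k) = ↑α \ (↑α₁ ∪ ⋯ ∪ ↑α_k), where α ∈ I_λ^n and α₁,…,α_k ∈ ↑α \ {α}, is a base for a topology τ_c on I_λ^n, and (I_λ^n, τ_c) is a compact Hausdorff space. -/

import Mathlib

open Set Topology

universe v

namespace ISemi

/-- The set of partial injective transformations (partial bijections) of `ι`
with rank (cardinality of the range, equivalently of the domain) at most `n`. -/
def Elem (ι : Type*) (n : ℕ) : Type _ :=
  {f : ι ≃. ι // {a : ι | (f a).isSome}.encard ≤ (n : ℕ∞)}

variable {ι : Type*} {n : ℕ}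

/-- Composition of partial bijections (written multiplicatively). -/
instance : Semigroup (Elem ι n) where
  mul f g := ⟨f.1.trans g.1, by
    refine le_trans (Set.encard_mono ?_) f.2
    intro a ha
    simp only [Set.mem_setOf_eq] at *
    rcases Option.isSome_iff_exists.1 ha with ⟨c, hc⟩
    rcases (PEquiv.trans_eq_some _ _ _ _).1 hc with ⟨b, hb, -⟩
    simp [hb]⟩
  mul_assoc f g h := Subtype.ext (PEquiv.trans_assoc f.1 g.1 h.1)

/-- The inverse partial bijection. -/
def inv (f : Elem ι n) : Elem ι n := ⟨f.1.symm, by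
  have key : ∀ (g : ι ≃. ι), {b : ι | (g.symm b).isSome} ⊆
      (fun p : {a : ι | (g a).isSome} => (g p.1).get p.2) '' Set.univ := by
    intro g b hb
    rcases Option.isSome_iff_exists.1 hb with ⟨a, ha⟩
    have ha' : b ∈ g a := (PEquiv.mem_iff_mem g).1 (Option.mem_def.2 ha)
    simp only [Option.mem_def] at ha'
    refine ⟨⟨a, ?_⟩, Set.mem_univ _, ?_⟩
    · simp [Set.mem_setOf_eq, ha']
    · simp [ha']
  calc {b : ι | (f.1.symm b).isSome}.encard
      ≤ ((fun p : {a : ι | (f.1 a).isSome} => (f.1 p.1).get p.2) '' Set.univ).encard :=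
        Set.encard_mono (key f.1)
    _ ≤ (Set.univ : Set {a : ι | (f.1 a).isSome}).encard := Set.encard_image_le _ _
    _ = {a : ι | (f.1 a).isSome}.encard := (Set.encard_univ _).trans (ENat.card_coe_set_eq _)
    _ ≤ (n : ℕ∞) := f.2⟩

/-- The zero (the empty partial map). -/
def zero (ι : Type*) (n : ℕ) : Elem ι n := ⟨⊥, by simp [PEquiv.bot_apply]⟩

/-- idempotents -/
def IsIdem (e : Elem ι n) : Prop := e * e = e

/-- The natural partial order on the inverse semigroup `Elem ι n`:
`f ≼ g` iff `f = e * g` for some idempotent `e`. -/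
def nle (f g : Elem ι n) : Prop := ∃ e : Elem ι n, IsIdem e ∧ f = e * g

/-- up-set of `f` w.r.t. the natural partial order -/
def upset (f : Elem ι n) : Set (Elem ι n) := {g | nle f g}

/-- the rank of a partial bijection: the cardinality of its domain (= range) -/
noncomputable def rank (f : Elem ι n) : ℕ∞ := {a : ι | (f.1 a).isSome}.encard

def dom (f : Elem ι n) : Set ι := {a : ι | (f.1 a).isSome}

def ran (f : Elem ι n) : Set ι := {b : ι | (f.1.symm b).isSome}

/-- A topology on `Elem ι n` is shift-continuous if all left and right
translations are continuous. -/
def ShiftContinuous (ι : Type*) (n : ℕ) [TopologicalSpace (Elem ι n)] : Prop :=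
  ∀ a : Elem ι n, Continuous (fun x : Elem ι n => a * x) ∧
    Continuous (fun x : Elem ι n => x * a)

/-- A space is feebly compact if every locally finite family of nonempty open
sets is finite. -/
def FeeblyCompact (X : Type*) [TopologicalSpace X] : Prop :=
  ∀ 𝒰 : Set (Set X), (∀ U ∈ 𝒰, IsOpen U ∧ U.Nonempty) →
    LocallyFinite (fun U : 𝒰 => (U : Set X)) → 𝒰.Finite

/-- A space is `d`-feebly compact if every discrete family of open sets is
finite; a family is discrete if every point has a neighbourhood meeting at
most one member of the family. -/
def DFeeblyCompact (X : Type*) [TopologicalSpace X] : Prop :=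
  ∀ 𝒰 : Set (Set X), (∀ U ∈ 𝒰, IsOpen U) →
    (∀ x : X, ∃ V ∈ 𝓝 x, {U ∈ 𝒰 | (U ∩ V).Nonempty}.Subsingleton) → 𝒰.Finite

/-- countably pracompact: there is a dense set `A` such that every infinite
subset of `A` has an accumulation point in `X`. -/
def CountablyPracompact (X : Type*) [TopologicalSpace X] : Prop :=
  ∃ A : Set X, Dense A ∧ ∀ B ⊆ A, B.Infinite → ∃ x : X, AccPt x (Filter.principal B)

/-- H-closed: closed in every Hausdorff space in which it embeds. -/
def HClosed (X : Type*) [TopologicalSpace X] : Prop :=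
  ∀ (Y : Type v) (_ : TopologicalSpace Y), T2Space Y →
    ∀ e : X → Y, IsEmbedding e → IsClosed (Set.range e)

/-- infra H-closed: every continuous image in a first-countable Hausdorff
space is closed. -/
def InfraHClosed (X : Type*) [TopologicalSpace X] : Prop :=
  ∀ (Y : Type v) (_ : TopologicalSpace Y), T2Space Y →
    FirstCountableTopology Y → ∀ f : X → Y, Continuous f → IsClosed (Set.range f)

/-- `Y`-compactness: every continuous image in `Y` is compact. -/
def YCompact (X : Type*) [TopologicalSpace X] (Y : Type*) [TopologicalSpace Y] : Prop :=
  ∀ f : X → Y, Continuous f → IsCompact (Set.range f)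

/-- scattered: every nonempty subset has a point isolated in it. -/
def Scattered (X : Type*) [TopologicalSpace X] : Prop :=
  ∀ S : Set X, S.Nonempty → ∃ x ∈ S, ∃ U : Set X, IsOpen U ∧ U ∩ S = {x}

/-- semiregular: there is a base consisting of regular open sets. -/
def Semiregular (X : Type*) [TopologicalSpace X] : Prop :=
  ∃ B : Set (Set X), TopologicalSpace.IsTopologicalBasis B ∧
    ∀ U ∈ B, interior (closure U) = U

/-- countably compact: every countable open cover has a finite subcover. -/
def CountablyCompact (X : Type*) [TopologicalSpace X] : Prop :=
  ∀ 𝒰 : Set (Set X), 𝒰.Countable → (∀ U ∈ 𝒰, IsOpen U) → ⋃₀ 𝒰 = Set.univ →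
    ∃ 𝒱 ⊆ 𝒰, 𝒱.Finite ∧ ⋃₀ 𝒱 = Set.univ

end ISemi

open ISemi in
/-- The base `B_c` of the topology `τ_c`. -/
def Bc (ι : Type*) (n : ℕ) : Set (Set (ISemi.Elem ι n)) :=
  {V | ∃ (f : ISemi.Elem ι n) (F : Finset (ISemi.Elem ι n)),
    ↑F ⊆ ISemi.upset f \ {f} ∧ V = ISemi.upset f \ ⋃ g ∈ F, ISemi.upset g}

/-- The topology `τ_c` generated by the base `B_c`. -/
def tauc (ι : Type*) (n : ℕ) : TopologicalSpace (ISemi.Elem ι n) :=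
  TopologicalSpace.generateFrom (Bc ι n)

open ISemi

namespace ISemi
variable {ι : Type*} {n : ℕ}

lemma mul_val (f g : Elem ι n) : (f * g).1 = f.1.trans g.1 := rfl

lemma idem_fix {e : Elem ι n} (he : IsIdem e) {a b : ι} (h : e.1 a = some b) : b = a := by
  have h2 : e.1.trans e.1 = e.1 := congrArg Subtype.val he
  have h3 : (e.1.trans e.1) a = some b := by rw [h2, h]
  rw [PEquiv.trans_eq_some] at h3
  obtain ⟨c, hc, hcb⟩ := h3
  rw [h] at hc; cases hc
  exact PEquiv.inj e.1 (Option.mem_def.2 hcb) (Option.mem_def.2 h)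

lemma nle_iff {f g : Elem ι n} : nle f g ↔ ∀ a b, f.1 a = some b → g.1 a = some b := by
  constructor
  · rintro ⟨e, he, rfl⟩ a b hab
    rw [mul_val, PEquiv.trans_eq_some] at hab
    obtain ⟨c, hc, hcb⟩ := hab
    have := idem_fix he hc
    subst this; exact hcb
  · intro h
    classical
    refine ⟨(⟨PEquiv.ofSet {a | (f.1 a).isSome}, ?_⟩ : Elem ι n), ?_, ?_⟩
    · refine le_trans (le_of_eq (congrArg Set.encard ?_)) f.2
      ext a; simp [PEquiv.ofSet]
    · apply Subtype.ext
      apply PEquiv.ext; intro a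
      erw [mul_val]
      simp only [mul_val, PEquiv.trans]
      by_cases ha : (f.1 a).isSome <;> simp [PEquiv.ofSet, PEquiv.coe_mk_apply, ha]
    · apply Subtype.ext
      apply PEquiv.ext; intro a
      erw [mul_val]
      by_cases ha : (f.1 a).isSome
      · obtain ⟨b, hb⟩ := Option.isSome_iff_exists.1 ha
        have hg := h a b hb
        simp [mul_val, PEquiv.trans, PEquiv.ofSet, PEquiv.coe_mk_apply, ha, hb, hg]
      · have hf : f.1 a = none := Option.not_isSome_iff_eq_none.1 ha
        simp [mul_val, PEquiv.trans, PEquiv.ofSet, PEquiv.coe_mk_apply, ha, hf]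
end ISemi

namespace ISemi
variable {ι : Type*} {n : ℕ}

lemma nle_refl (f : Elem ι n) : nle f f := nle_iff.2 fun _ _ h => h

lemma nle_trans {f g h : Elem ι n} (h1 : nle f g) (h2 : nle g h) : nle f h :=
  nle_iff.2 fun a b hab => nle_iff.1 h2 a b (nle_iff.1 h1 a b hab)

lemma nle_antisymm {f g : Elem ι n} (h1 : nle f g) (h2 : nle g f) : f = g := by
  apply Subtype.ext; apply PEquiv.ext; intro a
  cases hfa : f.1 a with
  | some b => exact (nle_iff.1 h1 a b hfa).symm
  | none =>
    cases hga : g.1 a with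
    | some b => rw [nle_iff.1 h2 a b hga] at hfa; cases hfa
    | none => rfl

lemma dom_mono {f g : Elem ι n} (h : nle f g) : dom f ⊆ dom g := by
  intro a ha
  obtain ⟨b, hb⟩ := Option.isSome_iff_exists.1 ha
  exact Option.isSome_iff_exists.2 ⟨b, nle_iff.1 h a b hb⟩

lemma dom_finite (f : Elem ι n) : (dom f).Finite :=
  Set.finite_of_encard_le_coe f.2

lemma eq_of_nle_rank {f g : Elem ι n} (h : nle f g) (hr : rank g ≤ rank f) : f = g := by
  have hdom : dom f = dom g :=
    (dom_finite f).eq_of_subset_of_encard_le (dom_mono h) hr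
  apply Subtype.ext; apply PEquiv.ext; intro a
  by_cases ha : (f.1 a).isSome
  · obtain ⟨b, hb⟩ := Option.isSome_iff_exists.1 ha
    rw [hb, nle_iff.1 h a b hb]
  · have ha2 : a ∉ dom f := ha
    have ha' : a ∉ dom g := by rwa [hdom] at ha2
    rw [Option.not_isSome_iff_eq_none.1 ha, Option.not_isSome_iff_eq_none.1 ha']

lemma rank_lt_of_nle_ne {f g : Elem ι n} (h : nle f g) (hne : f ≠ g) : rank f < rank g :=
  lt_of_le_of_ne (Set.encard_mono (dom_mono h)) (fun he => hne (eq_of_nle_rank h he.ge))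

lemma exists_join {f g h : Elem ι n} (hf : nle f h) (hg : nle g h) :
    ∃ j : Elem ι n, nle f j ∧ nle g j ∧ ∀ h' : Elem ι n, nle f h' → nle g h' → nle j h' := by
  have aux : ∀ (F G H : ι ≃. ι), (∀ a b, F a = some b → H a = some b) →
      (∀ a b, G a = some b → H a = some b) → ∀ a b : ι,
      (((F a).isSome ∨ (G a).isSome) ∧ H a = some b) →
      (((F.symm b).isSome ∨ (G.symm b).isSome) ∧ H.symm b = some a) := by
    rintro F G H hF hG a b ⟨hor, hab⟩
    have hsymm : H.symm b = some a := H.eq_some_iff.2 hab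
    refine ⟨?_, hsymm⟩
    rcases hor with hfa | hga
    · obtain ⟨c, hc⟩ := Option.isSome_iff_exists.1 hfa
      have h2 : H a = some c := hF a c hc
      rw [hab] at h2; cases h2
      exact Or.inl (Option.isSome_iff_exists.2 ⟨a, F.eq_some_iff.2 hc⟩)
    · obtain ⟨c, hc⟩ := Option.isSome_iff_exists.1 hga
      have h2 : H a = some c := hG a c hc
      rw [hab] at h2; cases h2
      exact Or.inr (Option.isSome_iff_exists.2 ⟨a, G.eq_some_iff.2 hc⟩)
  have hF : ∀ a b, f.1 a = some b → h.1 a = some b := nle_iff.1 hf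
  have hG : ∀ a b, g.1 a = some b → h.1 a = some b := nle_iff.1 hg
  have hFs : ∀ a b, f.1.symm a = some b → h.1.symm a = some b := fun a b hab =>
    h.1.eq_some_iff.2 (hF b a (f.1.eq_some_iff.1 hab))
  have hGs : ∀ a b, g.1.symm a = some b → h.1.symm a = some b := fun a b hab =>
    h.1.eq_some_iff.2 (hG b a (g.1.eq_some_iff.1 hab))
  classical
  refine ⟨⟨⟨fun a => if (f.1 a).isSome ∨ (g.1 a).isSome then h.1 a else none,
      fun b => if (f.1.symm b).isSome ∨ (g.1.symm b).isSome then h.1.symm b else none, ?_⟩, ?_⟩,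
      ?_, ?_, ?_⟩
  · intro a b
    constructor
    · intro hb
      beta_reduce at hb ⊢
      split_ifs at hb with hc
      · have h2 := aux f.1.symm g.1.symm h.1.symm hFs hGs b a ⟨hc, hb⟩
        simp only [PEquiv.symm_symm] at h2
        simp only [if_pos h2.1, h2.2]
    · intro hb
      beta_reduce at hb ⊢
      split_ifs at hb with hc
      · have h2 := aux f.1 g.1 h.1 hF hG a b ⟨hc, hb⟩
        simp only [if_pos h2.1, h2.2]
  · refine le_trans (Set.encard_mono ?_) h.2
    intro a ha
    simp only [Set.mem_setOf_eq, PEquiv.coe_mk_apply] at ha ⊢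
    split_ifs at ha with hc
    · exact ha
    · cases ha
  · refine nle_iff.2 fun a b hab => ?_
    have hs : (f.1 a).isSome := Option.isSome_iff_exists.2 ⟨b, hab⟩
    show (if (f.1 a).isSome ∨ (g.1 a).isSome then h.1 a else none) = some b
    rw [if_pos (Or.inl hs)]; exact hF a b hab
  · refine nle_iff.2 fun a b hab => ?_
    have hs : (g.1 a).isSome := Option.isSome_iff_exists.2 ⟨b, hab⟩
    show (if (f.1 a).isSome ∨ (g.1 a).isSome then h.1 a else none) = some b
    rw [if_pos (Or.inr hs)]; exact hG a b hab
  · intro h' hfh' hgh'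
    refine nle_iff.2 fun a b hab => ?_
    replace hab : (if (f.1 a).isSome ∨ (g.1 a).isSome then h.1 a else none) = some b := hab
    split_ifs at hab with hc
    · rcases hc with hfa | hga
      · obtain ⟨c, hcc⟩ := Option.isSome_iff_exists.1 hfa
        have h1 : h.1 a = some c := nle_iff.1 hf a c hcc
        rw [hab] at h1; cases h1
        exact nle_iff.1 hfh' a b hcc
      · obtain ⟨c, hcc⟩ := Option.isSome_iff_exists.1 hga
        have h1 : h.1 a = some c := nle_iff.1 hg a c hcc
        rw [hab] at h1; cases h1
        exact nle_iff.1 hgh' a b hcc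

lemma zero_nle (f : Elem ι n) : nle (zero ι n) f := by
  refine nle_iff.2 fun a b hab => ?_
  have : (⊥ : ι ≃. ι) a = some b := hab
  rw [PEquiv.bot_apply] at this; cases this

lemma upset_zero : upset (zero ι n) = Set.univ :=
  Set.eq_univ_of_forall fun f => zero_nle f

lemma rank_zero : rank (zero ι n) = 0 := by
  simp [rank, zero, PEquiv.bot_apply]

end ISemi

namespace ISemi
variable {ι : Type*} {n : ℕ}

lemma mem_upset {f g : Elem ι n} : g ∈ upset f ↔ nle f g := Iff.rfl

lemma upset_mem_Bc (f : Elem ι n) : upset f ∈ Bc ι n :=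
  ⟨f, ∅, by simp, by simp⟩

lemma univ_mem_Bc : (Set.univ : Set (Elem ι n)) ∈ Bc ι n := by
  rw [← upset_zero]; exact upset_mem_Bc _

lemma bc_isOpen {V : Set (Elem ι n)} (hV : V ∈ Bc ι n) : @IsOpen _ (tauc ι n) V :=
  TopologicalSpace.GenerateOpen.basic V hV

theorem bc_basis :
    @TopologicalSpace.IsTopologicalBasis (Elem ι n) (tauc ι n) (Bc ι n) := by
  letI := tauc ι n
  classical
  refine { exists_subset_inter := ?_, sUnion_eq := ?_, eq_generateFrom := rfl }
  · rintro B₁ ⟨f₁, F₁, hF₁, rfl⟩ B₂ ⟨f₂, F₂, hF₂, rfl⟩ x ⟨⟨hxf₁, hxF₁⟩, hxf₂, hxF₂⟩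
    simp only [Set.mem_iUnion, not_exists, exists_prop] at hxF₁ hxF₂
    obtain ⟨j, hj₁, hj₂, hjmin⟩ := exists_join (mem_upset.1 hxf₁) (mem_upset.1 hxf₂)
    have hjx : nle j x := hjmin x (mem_upset.1 hxf₁) (mem_upset.1 hxf₂)
    have step : ∀ h ∈ F₁ ∪ F₂, ∃ Fh : Finset (Elem ι n),
        (↑Fh ⊆ upset j \ {j}) ∧ (∀ j' ∈ Fh, ¬ nle j' x) ∧
        upset j ∩ upset h ⊆ ⋃ j' ∈ Fh, upset j' := by
      intro h hh
      have hhx : ¬ nle h x := by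
        rcases Finset.mem_union.1 hh with hh | hh
        · exact fun hc => hxF₁ h ⟨hh, hc⟩
        · exact fun hc => hxF₂ h ⟨hh, hc⟩
      by_cases hc : ∃ c, nle j c ∧ nle h c
      · obtain ⟨c, hjc, hhc⟩ := hc
        obtain ⟨j', hj'1, hj'2, hj'min⟩ := exists_join hjc hhc
        refine ⟨{j'}, ?_, ?_, ?_⟩
        · intro z hz
          simp only [Finset.coe_singleton, Set.mem_singleton_iff] at hz
          subst hz
          refine ⟨hj'1, ?_⟩
          intro hzz
          simp only [Set.mem_singleton_iff] at hzz
          subst hzz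
          exact hhx (nle_trans hj'2 hjx)
        · intro j'' hj''
          simp only [Finset.mem_singleton] at hj''
          subst hj''
          exact fun hcc => hhx (nle_trans hj'2 hcc)
        · rintro y ⟨hy₁, hy₂⟩
          simp only [Set.mem_iUnion, Finset.mem_singleton, exists_prop]
          exact ⟨j', rfl, hj'min y (mem_upset.1 hy₁) (mem_upset.1 hy₂)⟩
      · refine ⟨∅, by simp, by simp, ?_⟩
        rintro y ⟨hy₁, hy₂⟩
        exact absurd ⟨y, mem_upset.1 hy₁, mem_upset.1 hy₂⟩ hc
    choose Φ hΦ1 hΦ2 hΦ3 using step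
    set Fbig := (F₁ ∪ F₂).attach.biUnion (fun p => Φ p.1 p.2) with hFbig
    refine ⟨upset j \ ⋃ g ∈ Fbig, upset g, ⟨j, Fbig, ?_, rfl⟩, ?_, ?_⟩
    · intro z hz
      simp only [hFbig, Finset.coe_biUnion, Finset.mem_coe, Finset.mem_attach,
        Set.mem_iUnion, Set.iUnion_true] at hz
      obtain ⟨p, hp⟩ := hz
      exact hΦ1 p.1 p.2 hp
    · refine ⟨hjx, ?_⟩
      simp only [Set.mem_iUnion, exists_prop, not_exists, not_and]
      intro j' hj'
      simp only [hFbig, Finset.mem_biUnion, Finset.mem_attach, true_and] at hj'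
      obtain ⟨p, hp⟩ := hj'
      exact hΦ2 p.1 p.2 j' hp
    · rintro y ⟨hyj, hyF⟩
      simp only [Set.mem_iUnion, exists_prop, not_exists, not_and] at hyF
      have key : ∀ h ∈ F₁ ∪ F₂, ¬ nle h y := by
        intro h hh hcon
        have := hΦ3 h hh ⟨hyj, hcon⟩
        simp only [Set.mem_iUnion, exists_prop] at this
        obtain ⟨j', hj'mem, hj'y⟩ := this
        exact hyF j' (Finset.mem_biUnion.2 ⟨⟨h, hh⟩, Finset.mem_attach _ _, hj'mem⟩) hj'y
      constructor
      · refine ⟨mem_upset.2 (nle_trans hj₁ (mem_upset.1 hyj)), ?_⟩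
        simp only [Set.mem_iUnion, exists_prop, not_exists, not_and]
        exact fun h hh => key h (Finset.mem_union_left _ hh)
      · refine ⟨mem_upset.2 (nle_trans hj₂ (mem_upset.1 hyj)), ?_⟩
        simp only [Set.mem_iUnion, exists_prop, not_exists, not_and]
        exact fun h hh => key h (Finset.mem_union_right _ hh)
  · exact Set.eq_univ_of_univ_subset (Set.subset_sUnion_of_mem univ_mem_Bc)

end ISemi

namespace ISemi
variable {ι : Type*} {n : ℕ}

theorem bc_compact : @CompactSpace (Elem ι n) (tauc ι n) := by
  letI := tauc ι n
  classical
  refine ⟨?_⟩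
  rw [isCompact_iff_finite_subcover]
  intro idx U hU hcov
  have main : ∀ k : ℕ, ∀ f : Elem ι n, (n : ℕ∞) ≤ rank f + k →
      ∃ t : Finset idx, upset f ⊆ ⋃ i ∈ t, U i := by
    intro k
    induction k with
    | zero =>
      intro f hf
      simp only [Nat.cast_zero, add_zero] at hf
      have hrank : rank f = n := le_antisymm f.2 hf
      have hup : upset f = {f} := by
        ext g
        simp only [mem_upset, Set.mem_singleton_iff]
        constructor
        · intro hg
          exact (eq_of_nle_rank hg (le_trans g.2 (le_of_eq hrank.symm))).symm
        · rintro rfl; exact nle_refl _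
      obtain ⟨i₀, hi₀⟩ := Set.mem_iUnion.1 (hcov (Set.mem_univ f))
      refine ⟨{i₀}, ?_⟩
      rw [hup]
      intro y hy
      simp only [Set.mem_singleton_iff] at hy
      subst hy
      simp only [Set.mem_iUnion, Finset.mem_singleton, exists_prop]
      exact ⟨i₀, rfl, hi₀⟩
    | succ k ih =>
      intro f hf
      obtain ⟨i₀, hi₀⟩ := Set.mem_iUnion.1 (hcov (Set.mem_univ f))
      obtain ⟨B, hB, hfB, hBU⟩ := bc_basis.exists_subset_of_mem_open hi₀ (hU i₀)
      obtain ⟨g, F, hF, rfl⟩ := hB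
      obtain ⟨hfg, hfF⟩ := hfB
      simp only [Set.mem_iUnion, not_exists, exists_prop] at hfF
      have per : ∀ h ∈ F, ∃ t : Finset idx, upset f ∩ upset h ⊆ ⋃ i ∈ t, U i := by
        intro h hh
        by_cases hc : ∃ c, nle f c ∧ nle h c
        · obtain ⟨c, hfc, hhc⟩ := hc
          obtain ⟨j, hj1, hj2, hjmin⟩ := exists_join hfc hhc
          have hjne : j ≠ f := by
            rintro rfl
            exact hfF h ⟨hh, hj2⟩
          have hlt : rank f < rank j := rank_lt_of_nle_ne hj1 (Ne.symm hjne)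
          have hle : (n : ℕ∞) ≤ rank j + k := by
            have h1 : rank f + 1 ≤ rank j := Order.add_one_le_of_lt hlt
            calc (n : ℕ∞) ≤ rank f + (k + 1 : ℕ) := hf
              _ = (rank f + 1) + (k : ℕ∞) := by push_cast; ring
              _ ≤ rank j + (k : ℕ∞) := add_le_add_left h1 _
          obtain ⟨t, ht⟩ := ih j hle
          exact ⟨t, fun y hy =>
            ht (mem_upset.2 (hjmin y (mem_upset.1 hy.1) (mem_upset.1 hy.2)))⟩
        · exact ⟨∅, fun y hy => absurd ⟨y, mem_upset.1 hy.1, mem_upset.1 hy.2⟩ hc⟩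
      choose T hT using per
      refine ⟨insert i₀ (F.attach.biUnion fun p => T p.1 p.2), ?_⟩
      intro y hy
      by_cases hcase : ∃ h ∈ F, nle h y
      · obtain ⟨h, hh, hhy⟩ := hcase
        have h2 := hT h hh ⟨hy, mem_upset.2 hhy⟩
        simp only [Set.mem_iUnion, exists_prop] at h2 ⊢
        obtain ⟨i, hi, hyi⟩ := h2
        exact ⟨i, Finset.mem_insert.2 (Or.inr
          (Finset.mem_biUnion.2 ⟨⟨h, hh⟩, Finset.mem_attach _ _, hi⟩)), hyi⟩
      · push_neg at hcase
        have hgf : nle g f := mem_upset.1 hfg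
        have hyB : y ∈ upset g \ ⋃ h ∈ F, upset h := by
          refine ⟨mem_upset.2 (nle_trans hgf (mem_upset.1 hy)), ?_⟩
          simp only [Set.mem_iUnion, exists_prop, not_exists, not_and]
          exact fun h hh => hcase h hh
        have := hBU hyB
        simp only [Set.mem_iUnion, exists_prop]
        exact ⟨i₀, Finset.mem_insert_self _ _, this⟩
  obtain ⟨t, ht⟩ := main n (zero ι n) (by rw [rank_zero, zero_add])
  exact ⟨t, upset_zero ▸ ht⟩

theorem bc_t2 : @T2Space (Elem ι n) (tauc ι n) := by
  letI := tauc ι n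
  classical
  have hdiff : ∀ x y : Elem ι n, nle x y → x ≠ y →
      upset x \ upset y ∈ Bc ι n := by
    intro x y hxy hne
    refine ⟨x, {y}, ?_, ?_⟩
    · intro z hz
      simp only [Finset.coe_singleton, Set.mem_singleton_iff] at hz
      subst hz
      exact ⟨mem_upset.2 hxy, by simpa using (Ne.symm hne)⟩
    · simp
  refine ⟨fun x y hxy => ?_⟩
  by_cases hxyle : nle x y
  · refine ⟨upset x \ upset y, upset y, bc_isOpen (hdiff x y hxyle hxy),
      bc_isOpen (upset_mem_Bc y), ⟨mem_upset.2 (nle_refl x), ?_⟩,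
      mem_upset.2 (nle_refl y), ?_⟩
    · exact fun hc => hxy (nle_antisymm hxyle (mem_upset.1 hc))
    · exact Set.disjoint_left.2 fun z hz hz2 => hz.2 hz2
  · by_cases hyxle : nle y x
    · refine ⟨upset x, upset y \ upset x, bc_isOpen (upset_mem_Bc x),
        bc_isOpen (hdiff y x hyxle (Ne.symm hxy)), mem_upset.2 (nle_refl x),
        ⟨mem_upset.2 (nle_refl y), ?_⟩, ?_⟩
      · exact fun hc => hxy (nle_antisymm (mem_upset.1 hc) hyxle)
      · exact Set.disjoint_right.2 fun z hz hz2 => hz.2 hz2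
    · by_cases hc : ∃ c, nle x c ∧ nle y c
      · obtain ⟨c, hxc, hyc⟩ := hc
        obtain ⟨j, hj1, hj2, hjmin⟩ := exists_join hxc hyc
        have hjx : j ≠ x := fun h => hyxle (h ▸ hj2)
        have hjy : j ≠ y := fun h => hxyle (h ▸ hj1)
        refine ⟨upset x \ upset j, upset y \ upset j,
          bc_isOpen (hdiff x j hj1 (Ne.symm hjx)),
          bc_isOpen (hdiff y j hj2 (Ne.symm hjy)),
          ⟨mem_upset.2 (nle_refl x), ?_⟩, ⟨mem_upset.2 (nle_refl y), ?_⟩, ?_⟩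
        · exact fun hcc => hyxle (nle_trans hj2 (mem_upset.1 hcc))
        · exact fun hcc => hxyle (nle_trans hj1 (mem_upset.1 hcc))
        · refine Set.disjoint_left.2 fun z hz hz2 => ?_
          exact hz.2 (mem_upset.2 (hjmin z (mem_upset.1 hz.1) (mem_upset.1 hz2.1)))
      · refine ⟨upset x, upset y, bc_isOpen (upset_mem_Bc x), bc_isOpen (upset_mem_Bc y),
          mem_upset.2 (nle_refl x), mem_upset.2 (nle_refl y), ?_⟩
        exact Set.disjoint_left.2 fun z hz hz2 =>
          hc ⟨z, mem_upset.1 hz, mem_upset.1 hz2⟩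

end ISemi

theorem stmt12 (ι : Type*) [Infinite ι] (n : ℕ) (hn : 0 < n) :
    @TopologicalSpace.IsTopologicalBasis (ISemi.Elem ι n) (tauc ι n) (Bc ι n) ∧
    @CompactSpace (ISemi.Elem ι n) (tauc ι n) ∧
    @T2Space (ISemi.Elem ι n) (tauc ι n) := by
  exact ⟨ISemi.bc_basis, ISemi.bc_compact, ISemi.bc_t2⟩
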